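/- arXiv:2106.12395 — 2 statements merged into one kernel-verified Lean document; each statement's English description precedes it below -/
import Mathlib

section
/- Let $\mu,\nu$ be probability measures on $\mathbb{R}$ with finite first moments and let $\pi$ be a martingale coupling of $\mu$ and $\nu$ with disintegration $(\pi_x)$. Then the following are equivalent: (i) $\mathcal{W}_1(\pi_x,\pi_y) \le |x-y|$ for $\mu\otimes\mu$-a.e. $(x,y)$; (ii) for $\mu\otimes\mu$-a.e. $(x,y)$ with $x \le y$, $\pi_x$ is dominated by $\pi_y$ in first-order stochastic dominance. -/
set_option linter.unusedSectionVars false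
set_option maxHeartbeats 1000000

open MeasureTheory ProbabilityTheory Set Filter Topology

open MeasureTheory ProbabilityTheory Set Filter Topology

noncomputable def qf (m : Measure ℝ) (t : ℝ) : ℝ :=
  if 0 < t ∧ t < 1 then sInf {x | t ≤ cdf m x} else 0

variable {m : Measure ℝ} [IsProbabilityMeasure m]

lemma qf_le_iff {t x : ℝ} (ht0 : 0 < t) (ht1 : t < 1) :
    qf m t ≤ x ↔ t ≤ cdf m x := by
  have hne : {x | t ≤ cdf m x}.Nonempty := by
    obtain ⟨y, hy⟩ := ((tendsto_cdf_atTop m).eventually (eventually_ge_nhds ht1)).exists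
    exact ⟨y, hy⟩
  have hbdd : BddBelow {x | t ≤ cdf m x} := by
    obtain ⟨z, hz⟩ := eventually_atBot.mp ((tendsto_cdf_atBot m).eventually (eventually_lt_nhds ht0))
    refine ⟨z, fun y hy => ?_⟩
    by_contra h
    push_neg at h
    exact absurd (hy.trans ((monotone_cdf (μ := m)) h.le)) (not_le.2 (hz _ le_rfl))
  simp only [qf]
  rw [if_pos (⟨ht0, ht1⟩ : 0 < t ∧ t < 1)]
  constructor
  · intro h
    have key : ∀ y, x < y → t ≤ cdf m y := by
      intro y hxy
      obtain ⟨s, hs, hsy⟩ := (csInf_lt_iff hbdd hne).mp (lt_of_le_of_lt h hxy)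
      exact hs.trans ((monotone_cdf (μ := m)) hsy.le)
    have htend : Tendsto (cdf m) (𝓝[>] x) (𝓝 (cdf m x)) :=
      ((cdf m).right_continuous x).tendsto.mono_left
        (nhdsWithin_mono x Ioi_subset_Ici_self)
    exact ge_of_tendsto htend (eventually_mem_nhdsWithin.mono fun y hy => key y hy)
  · intro h
    exact csInf_le hbdd h

lemma measurable_qf : Measurable (qf m) := by
  apply measurable_of_Iic
  intro x
  by_cases hx : (0:ℝ) ≤ x
  · have : qf m ⁻¹' Iic x = (Ioo (0:ℝ) 1 ∩ Iic (cdf m x)) ∪ (Ioo (0:ℝ) 1)ᶜ := by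
      ext t
      by_cases ht : t ∈ Ioo (0:ℝ) 1
      · simp [mem_preimage, qf_le_iff ht.1 ht.2, ht]
      · simp only [mem_preimage, mem_Iic, mem_union, mem_inter_iff, mem_compl_iff, ht,
          false_and, false_or, not_false_iff, iff_true]
        simp only [mem_Ioo, not_and_or, not_lt] at ht
        simp only [qf, mem_Ioo] at *
        rw [if_neg]
        · exact hx
        · rintro ⟨h1, h2⟩; rcases ht with h | h <;> linarith
    rw [this]
    exact ((measurableSet_Ioo.inter measurableSet_Iic).union measurableSet_Ioo.compl)
  · have : qf m ⁻¹' Iic x = Ioo (0:ℝ) 1 ∩ Iic (cdf m x) := by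
      ext t
      by_cases ht : t ∈ Ioo (0:ℝ) 1
      · simp [mem_preimage, qf_le_iff ht.1 ht.2, ht]
      · simp only [mem_preimage, mem_Iic, mem_inter_iff, ht, false_and, iff_false]
        simp only [mem_Ioo, not_and_or, not_lt] at ht
        simp only [qf, mem_Ioo]
        rw [if_neg]
        · intro h; exact hx (le_trans h le_rfl)
        · rintro ⟨h1, h2⟩; rcases ht with h | h <;> linarith
    rw [this]
    exact measurableSet_Ioo.inter measurableSet_Iic

lemma map_qf : (volume.restrict (Ioo (0:ℝ) 1)).map (qf m) = m := by
  have hprob : IsProbabilityMeasure (volume.restrict (Ioo (0:ℝ) 1)) :=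
    ⟨by simp [Real.volume_Ioo]⟩
  have : IsProbabilityMeasure ((volume.restrict (Ioo (0:ℝ) 1)).map (qf m)) :=
    Measure.isProbabilityMeasure_map measurable_qf.aemeasurable
  refine Measure.ext_of_Iic _ _ fun x => ?_
  rw [Measure.map_apply measurable_qf measurableSet_Iic,
    Measure.restrict_apply (measurable_qf measurableSet_Iic)]
  have hsub : qf m ⁻¹' Iic x ∩ Ioo 0 1 = Ioc (0:ℝ) (cdf m x) ∩ Ioo 0 1 := by
    ext t
    simp only [mem_inter_iff, mem_preimage, mem_Iic, mem_Ioc, mem_Ioo, and_congr_left_iff]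
    intro ht
    rw [qf_le_iff ht.1 ht.2]
    exact ⟨fun h => ⟨ht.1, h⟩, fun h => h.2⟩
  rw [hsub, ← ofReal_cdf]
  rcases lt_or_eq_of_le (cdf_le_one (μ := m) x) with h1 | h1
  · have : Ioc (0:ℝ) (cdf m x) ∩ Ioo 0 1 = Ioc 0 (cdf m x) := by
      apply inter_eq_left.mpr
      intro t ht
      exact ⟨ht.1, lt_of_le_of_lt ht.2 h1⟩
    rw [this, Real.volume_Ioc, sub_zero]
  · have : Ioc (0:ℝ) (cdf m x) ∩ Ioo 0 1 = Ioo 0 1 := by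
      apply inter_eq_right.mpr
      intro t ht
      exact ⟨ht.1, by rw [h1]; exact ht.2.le⟩
    rw [this, Real.volume_Ioo, h1]
    norm_num


lemma integral_qf (m : Measure ℝ) [IsProbabilityMeasure m] (hm : Integrable (fun y => y) m) :
    ∫ t in Ioo (0:ℝ) 1, qf m t = ∫ y, y ∂m := by
  conv_rhs => rw [← map_qf (m := m)]
  exact (integral_map measurable_qf.aemeasurable measurable_id.aestronglyMeasurable).symm

lemma integrable_qf (m : Measure ℝ) [IsProbabilityMeasure m] (hm : Integrable (fun y => y) m) :
    Integrable (qf m) (volume.restrict (Ioo (0:ℝ) 1)) := by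
  have h := hm
  rw [← map_qf (m := m)] at h
  exact (integrable_map_measure h.aestronglyMeasurable measurable_qf.aemeasurable).mp h

lemma cdf_le_of_dom (α β : Measure ℝ) [IsProbabilityMeasure α] [IsProbabilityMeasure β]
    (hdom : ∀ a, α (Ici a) ≤ β (Ici a)) : ∀ x, cdf β x ≤ cdf α x := by
  intro x
  have hIoi : α (Ioi x) ≤ β (Ioi x) := by
    have hU : Ioi x = ⋃ n : ℕ, Ici (x + ((n:ℝ) + 1)⁻¹) := by
      ext y
      simp only [mem_Ioi, mem_iUnion, mem_Ici]
      constructor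
      · intro h
        obtain ⟨n, hn⟩ := exists_nat_one_div_lt (sub_pos.mpr h)
        exact ⟨n, by rw [one_div] at hn; linarith⟩
      · rintro ⟨n, hn⟩
        have : (0:ℝ) < ((n:ℝ)+1)⁻¹ := by positivity
        linarith
    have hmono : Monotone fun n : ℕ => Ici (x + ((n:ℝ) + 1)⁻¹) := by
      intro a b hab
      apply Ici_subset_Ici.mpr
      have : ((b:ℝ)+1)⁻¹ ≤ ((a:ℝ)+1)⁻¹ := by
        apply inv_anti₀ (by positivity)
        have : (a:ℝ) ≤ (b:ℝ) := Nat.cast_le.mpr hab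
        linarith
      linarith
    rw [hU, Directed.measure_iUnion hmono.directed_le,
      Directed.measure_iUnion hmono.directed_le]
    exact iSup_mono fun n => hdom _
  rw [cdf_eq_real, cdf_eq_real, measureReal_def, measureReal_def]
  apply ENNReal.toReal_le_toReal (measure_ne_top _ _) (measure_ne_top _ _) |>.mpr
  rw [← compl_Ioi, prob_compl_eq_one_sub measurableSet_Ioi,
    prob_compl_eq_one_sub measurableSet_Ioi]
  exact tsub_le_tsub_left hIoi 1


/-- The Wasserstein-1 distance between two measures on `ℝ`, as the infimum of transport costs
over all couplings. -/
noncomputable def W1 (α β : Measure ℝ) : ENNReal :=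
  sInf { c | ∃ γ : Measure (ℝ × ℝ),
    γ.map Prod.fst = α ∧ γ.map Prod.snd = β ∧ c = ∫⁻ p, edist p.1 p.2 ∂γ }

theorem W1_le_of_dom (α β : Measure ℝ) [IsProbabilityMeasure α] [IsProbabilityMeasure β]
    (hα : Integrable (fun y => y) α) (hβ : Integrable (fun y => y) β)
    (hdom : ∀ a, α (Ici a) ≤ β (Ici a)) :
    W1 α β ≤ ENNReal.ofReal (∫ y, y ∂β - ∫ y, y ∂α) := by
  set P := volume.restrict (Ioo (0:ℝ) 1) with hP
  set γ := P.map (fun t => (qf α t, qf β t)) with hγ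
  have hmeas : Measurable (fun t => (qf α t, qf β t)) :=
    (measurable_qf (m := α)).prodMk (measurable_qf (m := β))
  have hle : ∀ t ∈ Ioo (0:ℝ) 1, qf α t ≤ qf β t := by
    intro t ht
    rw [qf_le_iff ht.1 ht.2]
    have h1 : t ≤ cdf β (qf β t) := (qf_le_iff ht.1 ht.2).mp le_rfl
    exact h1.trans (cdf_le_of_dom α β hdom _)
  have hcost : ∫⁻ p, edist p.1 p.2 ∂γ
      = ENNReal.ofReal (∫ y, y ∂β - ∫ y, y ∂α) := by
    rw [hγ, lintegral_map (by
      exact (measurable_fst.edist measurable_snd)) hmeas]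
    have heq : ∀ᵐ t ∂P, edist (qf α t, qf β t).1 (qf α t, qf β t).2
        = ENNReal.ofReal (qf β t - qf α t) := by
      rw [hP, ae_restrict_iff' measurableSet_Ioo]
      filter_upwards with t ht
      rw [edist_dist, Real.dist_eq, abs_of_nonpos (by linarith [hle t ht])]
      ring_nf
    have hsub : Integrable (fun t => qf β t - qf α t) P :=
      (integrable_qf β hβ).sub (integrable_qf α hα)
    have hnn : 0 ≤ᵐ[P] fun t => qf β t - qf α t := by
      rw [hP, EventuallyLE, ae_restrict_iff' measurableSet_Ioo]
      filter_upwards with t ht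
      simp only [Pi.zero_apply, sub_nonneg]
      exact hle t ht
    rw [lintegral_congr_ae heq, ← ofReal_integral_eq_lintegral_ofReal hsub hnn,
      integral_sub (integrable_qf β hβ) (integrable_qf α hα)]
    rw [integral_qf β hβ, integral_qf α hα]
  apply sInf_le
  refine ⟨γ, ?_, ?_, hcost.symm⟩
  · rw [hγ, Measure.map_map measurable_fst hmeas]
    exact map_qf
  · rw [hγ, Measure.map_map measurable_snd hmeas]
    exact map_qf

theorem W1_comm (α β : Measure ℝ) : W1 α β = W1 β α := by
  have key : ∀ α β : Measure ℝ, W1 α β ≤ W1 β α := by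
    intro α β
    apply le_sInf
    rintro c ⟨γ, h1, h2, rfl⟩
    apply sInf_le
    refine ⟨γ.map Prod.swap, ?_, ?_, ?_⟩
    · rw [Measure.map_map measurable_fst measurable_swap]
      exact h2
    · rw [Measure.map_map measurable_snd measurable_swap]
      exact h1
    · rw [lintegral_map (measurable_fst.edist measurable_snd) measurable_swap]
      simp only [Prod.fst_swap, Prod.snd_swap]
      exact lintegral_congr fun p => edist_comm _ _
  exact le_antisymm (key α β) (key β α)

lemma edist_real_split (a b : ℝ) :
    edist a b = ENNReal.ofReal (b - a) + ENNReal.ofReal (a - b) := by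
  rcases le_total a b with h | h
  · rw [edist_dist, Real.dist_eq, abs_of_nonpos (by linarith),
      ENNReal.ofReal_eq_zero.mpr (by linarith : a - b ≤ 0), add_zero]
    ring_nf
  · rw [edist_dist, Real.dist_eq, abs_of_nonneg (by linarith),
      ENNReal.ofReal_eq_zero.mpr (by linarith : b - a ≤ 0), zero_add]

theorem cost_lower (α β : Measure ℝ) [IsProbabilityMeasure α] [IsProbabilityMeasure β]
    (hα : Integrable (fun y => y) α) (hβ : Integrable (fun y => y) β)
    (hm : ∫ y, y ∂α ≤ ∫ y, y ∂β)
    (γ : Measure (ℝ × ℝ)) (h1 : γ.map Prod.fst = α) (h2 : γ.map Prod.snd = β) :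
    ENNReal.ofReal (∫ y, y ∂β - ∫ y, y ∂α)
      + 2 * ∫⁻ a, (α (Ici a) - β (Ici a)) ∂volume ≤ ∫⁻ p, edist p.1 p.2 ∂γ := by
  have hγuniv : IsProbabilityMeasure γ := by
    constructor
    calc γ univ = γ (Prod.fst ⁻¹' univ) := by rw [preimage_univ]
    _ = γ.map Prod.fst univ := (Measure.map_apply measurable_fst .univ).symm
    _ = 1 := by rw [h1]; exact measure_univ
  have hintf : Integrable (fun p : ℝ × ℝ => p.1) γ := by
    have h := hα; rw [← h1] at h
    exact (integrable_map_measure h.aestronglyMeasurable measurable_fst.aemeasurable).mp h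
  have hints : Integrable (fun p : ℝ × ℝ => p.2) γ := by
    have h := hβ; rw [← h2] at h
    exact (integrable_map_measure h.aestronglyMeasurable measurable_snd.aemeasurable).mp h
  have hmf : ∫ p, p.1 ∂γ = ∫ y, y ∂α := by
    rw [← h1]
    exact (integral_map measurable_fst.aemeasurable measurable_id.aestronglyMeasurable).symm
  have hms : ∫ p, p.2 ∂γ = ∫ y, y ∂β := by
    rw [← h2]
    exact (integral_map measurable_snd.aemeasurable measurable_id.aestronglyMeasurable).symm
  set A := ∫⁻ p : ℝ × ℝ, ENNReal.ofReal (p.1 - p.2) ∂γ with hA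
  set B := ∫⁻ p : ℝ × ℝ, ENNReal.ofReal (p.2 - p.1) ∂γ with hB
  -- finiteness
  have habs : ∀ g : (ℝ × ℝ) → ℝ, Integrable g γ →
      (∫⁻ p, ENNReal.ofReal |g p| ∂γ) ≠ ⊤ := by
    intro g hg
    have := hg.hasFiniteIntegral
    rw [HasFiniteIntegral] at this
    refine ne_of_lt (lt_of_le_of_lt (le_of_eq (lintegral_congr fun p => ?_)) this)
    rw [← Real.enorm_eq_ofReal_abs]
  have hgAB : Integrable (fun p : ℝ × ℝ => p.1 - p.2) γ := hintf.sub hints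
  have hAfin : A ≠ ⊤ := by
    refine ne_of_lt (lt_of_le_of_lt (lintegral_mono fun p => ?_) (habs _ hgAB).lt_top)
    exact ENNReal.ofReal_le_ofReal (le_abs_self _)
  have hBfin : B ≠ ⊤ := by
    refine ne_of_lt (lt_of_le_of_lt (lintegral_mono fun p => ?_) (habs _ hgAB).lt_top)
    exact ENNReal.ofReal_le_ofReal (by rw [abs_sub_comm]; exact le_abs_self _)
  -- the real-variable identity
  have hBA : B.toReal - A.toReal = ∫ y, y ∂β - ∫ y, y ∂α := by
    have hint : Integrable (fun p : ℝ × ℝ => p.2 - p.1) γ := hints.sub hintf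
    have := integral_eq_lintegral_pos_part_sub_lintegral_neg_part hint
    rw [integral_sub hints hintf, hmf, hms] at this
    have e3 : (∫⁻ a : ℝ × ℝ, ENNReal.ofReal (-(a.2 - a.1)) ∂γ) = A :=
      lintegral_congr fun p => by rw [neg_sub]
    have e2 : (∫⁻ a : ℝ × ℝ, ENNReal.ofReal (a.2 - a.1) ∂γ) = B := rfl
    rw [e3, e2] at this
    linarith
  have hBeq : B = ENNReal.ofReal (∫ y, y ∂β - ∫ y, y ∂α) + A := by
    rw [← ENNReal.ofReal_toReal hBfin,
      show B.toReal = (∫ y, y ∂β - ∫ y, y ∂α) + A.toReal by linarith [hBA],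
      ENNReal.ofReal_add (by linarith) ENNReal.toReal_nonneg, ENNReal.ofReal_toReal hAfin]
  -- cost splits
  have hcost : ∫⁻ p, edist p.1 p.2 ∂γ = B + A := by
    rw [hB, hA, ← lintegral_add_left (by fun_prop)]
    exact lintegral_congr fun p => edist_real_split _ _
  -- D ≤ A via layer cake
  have hDleA : (∫⁻ a, (α (Ici a) - β (Ici a)) ∂volume) ≤ A := by
    set s : Set ((ℝ × ℝ) × ℝ) := {q | q.1.2 < q.2 ∧ q.2 ≤ q.1.1} with hs_def
    have hs : MeasurableSet s :=
      (measurableSet_lt (measurable_fst.snd) measurable_snd).inter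
        (measurableSet_le measurable_snd measurable_fst.fst)
    have hf : Measurable (s.indicator (1 : ((ℝ × ℝ) × ℝ) → ENNReal)) :=
      measurable_one.indicator hs
    have hA2 : A = ∫⁻ a, γ {p : ℝ × ℝ | p.2 < a ∧ a ≤ p.1} ∂volume := by
      have e1 : A = ∫⁻ p, ∫⁻ a, s.indicator 1 (p, a) ∂volume ∂γ := by
        refine lintegral_congr fun p => ?_
        rw [← Real.volume_Ioc]
        rw [← lintegral_indicator_one measurableSet_Ioc]
        refine lintegral_congr fun a => ?_
        by_cases h : a ∈ Ioc p.2 p.1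
        · rw [indicator_of_mem h, indicator_of_mem (show (p, a) ∈ s from h)]
          simp
        · rw [indicator_of_notMem h, indicator_of_notMem (show (p, a) ∉ s from h)]
      rw [e1, ← lintegral_prod _ hf.aemeasurable, lintegral_prod_symm _ hf.aemeasurable]
      refine lintegral_congr fun a => ?_
      have hsec : MeasurableSet {p : ℝ × ℝ | p.2 < a ∧ a ≤ p.1} :=
        (measurableSet_lt measurable_snd measurable_const).inter
          (measurableSet_le measurable_const measurable_fst)
      rw [← lintegral_indicator_one hsec]
      refine lintegral_congr fun p => ?_
      by_cases h : p ∈ {p : ℝ × ℝ | p.2 < a ∧ a ≤ p.1}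
      · rw [indicator_of_mem (show ((p, a) : (ℝ × ℝ) × ℝ) ∈ s from h), indicator_of_mem h]
        simp
      · rw [indicator_of_notMem (show ((p, a) : (ℝ × ℝ) × ℝ) ∉ s from h),
          indicator_of_notMem h]
    rw [hA2]
    refine lintegral_mono fun a => ?_
    rw [tsub_le_iff_right]
    have hα_eq : α (Ici a) = γ {p : ℝ × ℝ | a ≤ p.1} := by
      rw [← h1, Measure.map_apply measurable_fst measurableSet_Ici]; rfl
    have hβ_eq : β (Ici a) = γ {p : ℝ × ℝ | a ≤ p.2} := by
      rw [← h2, Measure.map_apply measurable_snd measurableSet_Ici]; rfl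
    rw [hα_eq, hβ_eq]
    calc γ {p : ℝ × ℝ | a ≤ p.1}
        ≤ γ ({p : ℝ × ℝ | p.2 < a ∧ a ≤ p.1} ∪ {p : ℝ × ℝ | a ≤ p.2}) := by
          apply measure_mono
          intro p hp
          rcases lt_or_ge p.2 a with h | h
          · exact Or.inl ⟨h, hp⟩
          · exact Or.inr h
      _ ≤ γ {p : ℝ × ℝ | p.2 < a ∧ a ≤ p.1} + γ {p : ℝ × ℝ | a ≤ p.2} :=
          measure_union_le _ _
  rw [hcost, hBeq, two_mul]
  calc ENNReal.ofReal (∫ y, y ∂β - ∫ y, y ∂α)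
      + ((∫⁻ a, (α (Ici a) - β (Ici a)) ∂volume) + (∫⁻ a, (α (Ici a) - β (Ici a)) ∂volume))
      ≤ ENNReal.ofReal (∫ y, y ∂β - ∫ y, y ∂α) + (A + A) := by
        gcongr <;> exact hDleA
    _ = ENNReal.ofReal (∫ y, y ∂β - ∫ y, y ∂α) + A + A := by ring

theorem dom_everywhere (α β : Measure ℝ) [IsProbabilityMeasure α] [IsProbabilityMeasure β]
    (h : ∀ᵐ a ∂(volume : Measure ℝ), α (Ici a) ≤ β (Ici a)) :
    ∀ a, α (Ici a) ≤ β (Ici a) := by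
  intro a
  refine ENNReal.le_of_forall_pos_le_add fun ε hε _ => ?_
  have hanti : Antitone fun n : ℕ => Ici (a - ((n:ℝ) + 1)⁻¹) := by
    intro i j hij
    apply Ici_subset_Ici.mpr
    have h1 : ((j:ℝ) + 1)⁻¹ ≤ ((i:ℝ) + 1)⁻¹ := by
      apply inv_anti₀ (by positivity)
      have : (i:ℝ) ≤ (j:ℝ) := Nat.cast_le.mpr hij
      linarith
    linarith
  have hiInter : (⋂ n : ℕ, Ici (a - ((n:ℝ) + 1)⁻¹)) = Ici a := by
    ext x
    simp only [mem_iInter, mem_Ici]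
    constructor
    · intro hx
      by_contra hlt
      push_neg at hlt
      obtain ⟨n, hn⟩ := exists_nat_one_div_lt (sub_pos.mpr hlt)
      rw [one_div] at hn
      linarith [hx n]
    · intro hx n
      have : (0:ℝ) < ((n:ℝ)+1)⁻¹ := by positivity
      linarith
  have htend : Tendsto (fun n : ℕ => β (Ici (a - ((n:ℝ) + 1)⁻¹))) atTop (𝓝 (β (Ici a))) := by
    have := tendsto_measure_iInter_atTop (μ := β)
      (fun n => measurableSet_Ici.nullMeasurableSet) hanti ⟨0, measure_ne_top _ _⟩
    rw [hiInter] at this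
    exact this
  have hlt : β (Ici a) < β (Ici a) + ε :=
    ENNReal.lt_add_right (measure_ne_top _ _) (by exact_mod_cast hε.ne')
  obtain ⟨n, hn⟩ := (htend.eventually (eventually_lt_nhds hlt)).exists
  -- find a good point b in Ioo (a - (n+1)⁻¹) a
  have hpos : (0:ℝ) < ((n:ℝ)+1)⁻¹ := by positivity
  have hne : ({x | α (Ici x) ≤ β (Ici x)} ∩ Ioo (a - ((n:ℝ)+1)⁻¹) a).Nonempty := by
    by_contra hemp
    rw [not_nonempty_iff_eq_empty] at hemp
    have hsub : Ioo (a - ((n:ℝ)+1)⁻¹) a ⊆ {x | ¬ (α (Ici x) ≤ β (Ici x))} := by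
      intro x hx hgood
      have hx2 : x ∈ ({x | α (Ici x) ≤ β (Ici x)} ∩ Ioo (a - ((n:ℝ)+1)⁻¹) a) := ⟨hgood, hx⟩
      rw [hemp] at hx2
      exact notMem_empty x hx2
    have h0 : volume (Ioo (a - ((n:ℝ)+1)⁻¹) a) = 0 :=
      measure_mono_null hsub (ae_iff.mp h)
    rw [Real.volume_Ioo] at h0
    rw [ENNReal.ofReal_eq_zero] at h0
    linarith
  obtain ⟨b, hbgood, hbmem⟩ := hne
  calc α (Ici a) ≤ α (Ici b) := measure_mono (Ici_subset_Ici.mpr hbmem.2.le)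
    _ ≤ β (Ici b) := hbgood
    _ ≤ β (Ici (a - ((n:ℝ)+1)⁻¹)) := measure_mono (Ici_subset_Ici.mpr (by linarith [hbmem.1]))
    _ ≤ β (Ici a) + ε := hn.le


lemma ae_prod_fst {μ : Measure ℝ} [IsProbabilityMeasure μ] {P : ℝ → Prop}
    (h : ∀ᵐ x ∂μ, P x) : ∀ᵐ p ∂(μ.prod μ), P p.1 := by
  rw [ae_iff] at h ⊢
  have hsub : {p : ℝ × ℝ | ¬ P p.1} ⊆ (toMeasurable μ {x | ¬ P x}) ×ˢ univ := by
    intro p hp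
    exact ⟨subset_toMeasurable _ _ hp, mem_univ _⟩
  refine measure_mono_null hsub ?_
  rw [Measure.prod_prod, measure_toMeasurable, h, zero_mul]

lemma ae_prod_snd {μ : Measure ℝ} [IsProbabilityMeasure μ] {P : ℝ → Prop}
    (h : ∀ᵐ x ∂μ, P x) : ∀ᵐ p ∂(μ.prod μ), P p.2 := by
  rw [ae_iff] at h ⊢
  have hsub : {p : ℝ × ℝ | ¬ P p.2} ⊆ univ ×ˢ (toMeasurable μ {x | ¬ P x}) := by
    intro p hp
    exact ⟨mem_univ _, subset_toMeasurable _ _ hp⟩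
  refine measure_mono_null hsub ?_
  rw [Measure.prod_prod, measure_toMeasurable, h, mul_zero]

lemma ae_prod_swap {μ : Measure ℝ} [IsProbabilityMeasure μ] {Q : ℝ × ℝ → Prop}
    (h : ∀ᵐ p ∂(μ.prod μ), Q p) : ∀ᵐ p ∂(μ.prod μ), Q p.swap := by
  rw [ae_iff] at h ⊢
  have he : {p : ℝ × ℝ | ¬ Q p.swap} = Prod.swap ⁻¹' {p : ℝ × ℝ | ¬ Q p} := rfl
  rw [he]
  refine le_antisymm ?_ (zero_le)
  calc (μ.prod μ) (Prod.swap ⁻¹' {p : ℝ × ℝ | ¬ Q p})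
      ≤ ((μ.prod μ).map Prod.swap) {p : ℝ × ℝ | ¬ Q p} :=
        Measure.le_map_apply measurable_swap.aemeasurable _
    _ = 0 := by rw [Measure.prod_swap]; exact h

theorem forward_pair (α β : Measure ℝ) [IsProbabilityMeasure α] [IsProbabilityMeasure β]
    (hα : Integrable (fun y => y) α) (hβ : Integrable (fun y => y) β)
    (hm : ∫ y, y ∂α ≤ ∫ y, y ∂β)
    (hW : W1 α β ≤ ENNReal.ofReal (∫ y, y ∂β - ∫ y, y ∂α)) :
    ∀ a, α (Ici a) ≤ β (Ici a) := by
  apply dom_everywhere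
  have hmeasD : Measurable fun a : ℝ => α (Ici a) - β (Ici a) := by
    have h1 : Antitone fun a : ℝ => α (Ici a) :=
      fun i j hij => measure_mono (Ici_subset_Ici.mpr hij)
    have h2 : Antitone fun a : ℝ => β (Ici a) :=
      fun i j hij => measure_mono (Ici_subset_Ici.mpr hij)
    exact h1.measurable.sub h2.measurable
  have hlow : ENNReal.ofReal (∫ y, y ∂β - ∫ y, y ∂α)
      + 2 * ∫⁻ a, (α (Ici a) - β (Ici a)) ∂volume ≤ W1 α β := by
    apply le_sInf
    rintro c ⟨γ, h1, h2, rfl⟩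
    exact cost_lower α β hα hβ hm γ h1 h2
  have hcomb := hlow.trans hW
  have h2D : 2 * ∫⁻ a, (α (Ici a) - β (Ici a)) ∂volume ≤ 0 :=
    (ENNReal.add_le_add_iff_left ENNReal.ofReal_ne_top).mp
      (hcomb.trans_eq (add_zero _).symm)
  have hD : ∫⁻ a, (α (Ici a) - β (Ici a)) ∂volume = 0 := by
    have := le_antisymm h2D (zero_le)
    rcases mul_eq_zero.mp this with h | h
    · norm_num at h
    · exact h
  filter_upwards [(lintegral_eq_zero_iff hmeasD).mp hD] with a ha
  exact tsub_eq_zero_iff_le.mp ha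


/-- For a martingale coupling with disintegration `κ`, the kernel is `μ ⊗ μ`-a.e. 1-Lipschitz in
Wasserstein-1 distance if and only if `μ ⊗ μ`-a.e. the kernels are increasing (in `x`) for
first-order stochastic dominance. -/
theorem lipschitz_kernel_iff_stochasticDominance (μ : Measure ℝ)
    [IsProbabilityMeasure μ] (hμ : Integrable (fun y => y) μ)
    (κ : Kernel ℝ ℝ) [IsMarkovKernel κ]
    (hint : ∀ x, Integrable (fun y => y) (κ x))
    (hmart : ∀ᵐ x ∂μ, ∫ y, y ∂(κ x) = x) :
    (∀ᵐ p ∂(μ.prod μ), W1 (κ p.1) (κ p.2) ≤ ENNReal.ofReal |p.1 - p.2|) ↔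
    (∀ᵐ p ∂(μ.prod μ), p.1 ≤ p.2 →
      ∀ a : ℝ, κ p.1 (Set.Ici a) ≤ κ p.2 (Set.Ici a)) := by
  have hm1 : ∀ᵐ p ∂(μ.prod μ), ∫ y, y ∂(κ p.1) = p.1 := ae_prod_fst hmart
  have hm2 : ∀ᵐ p ∂(μ.prod μ), ∫ y, y ∂(κ p.2) = p.2 := ae_prod_snd hmart
  constructor
  · intro hlip
    filter_upwards [hlip, hm1, hm2] with p h1 h2 h3
    intro hle a
    refine forward_pair (κ p.1) (κ p.2) (hint _) (hint _) (by rw [h2, h3]; exact hle) ?_ a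
    rw [h2, h3, show p.2 - p.1 = |p.1 - p.2| by
      rw [abs_sub_comm, abs_of_nonneg (sub_nonneg.mpr hle)]]
    exact h1
  · intro hdom
    have hdomswap := ae_prod_swap hdom
    filter_upwards [hdom, hdomswap, hm1, hm2] with p hd hds h2 h3
    simp only [Prod.fst_swap, Prod.snd_swap] at hds
    rcases le_total p.1 p.2 with hle | hle
    · have := W1_le_of_dom (κ p.1) (κ p.2) (hint _) (hint _) (hd hle)
      rw [h2, h3] at this
      rwa [abs_sub_comm, abs_of_nonneg (sub_nonneg.mpr hle)]
    · have := W1_le_of_dom (κ p.2) (κ p.1) (hint _) (hint _) (hds hle)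
      rw [h2, h3] at this
      rw [W1_comm]
      rwa [abs_of_nonneg (sub_nonneg.mpr hle)]
end

section
/- Let $X, Y$ be independent real-valued continuous processes on $[s,t]$ defined on a common probability space with $X_s = x < y = Y_s$ almost surely. Let $\tau = \inf\{u \in [s,t] : X_u = Y_u\}$ (with $\tau = \infty$ if the paths never meet) and define $\tilde{X}_u = X_u$ for $u \le \tau$ and $\tilde{X}_u = Y_u$ for $\tau < u \le t$. Then $\tilde{X}_u \le Y_u$ for all $u \in [s,t]$ almost surely. -/
open MeasureTheory ProbabilityTheory
open scoped Classical

/-- Path-swapping coupling: if `X` and `Y` are independent continuous processes on `[s,t]` with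
`X s = x < y = Y s` a.s., and `X̃` follows `X` until the first meeting time of `X` and `Y` and
follows `Y` afterwards, then `X̃ ≤ Y` on `[s,t]` almost surely. -/
theorem path_swap_coupling_le {Ω : Type*} {mΩ : MeasurableSpace Ω} {μ : Measure Ω}
    [IsProbabilityMeasure μ] (s t x y : ℝ) (hst : s ≤ t) (hxy : x < y)
    (X Y : ℝ → Ω → ℝ)
    (hXcont : ∀ᵐ ω ∂μ, ContinuousOn (fun u => X u ω) (Set.Icc s t))
    (hYcont : ∀ᵐ ω ∂μ, ContinuousOn (fun u => Y u ω) (Set.Icc s t))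
    (hXs : ∀ᵐ ω ∂μ, X s ω = x) (hYs : ∀ᵐ ω ∂μ, Y s ω = y)
    (hindep : IndepFun (fun ω => fun u => X u ω) (fun ω => fun u => Y u ω) μ) :
    ∀ᵐ ω ∂μ, ∀ u ∈ Set.Icc s t,
      (if ∃ r ∈ Set.Icc s u, X r ω = Y r ω then Y u ω else X u ω) ≤ Y u ω := by
  filter_upwards [hXcont, hYcont, hXs, hYs] with ω hX hY hxs hys
  intro u hu
  split_ifs with h
  · exact le_refl _
  · -- no meeting on [s,u]; show X u ω ≤ Y u ω via IVT on Y - X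
    by_contra hlt
    push_neg at hlt
    have hsub : Set.Icc s u ⊆ Set.Icc s t := Set.Icc_subset_Icc le_rfl hu.2
    have hf : ContinuousOn (fun r => Y r ω - X r ω) (Set.Icc s u) :=
      ((hY.mono hsub).sub (hX.mono hsub))
    have hmem : (0 : ℝ) ∈ Set.Icc (Y u ω - X u ω) (Y s ω - X s ω) := by
      constructor
      · linarith
      · rw [hxs, hys]; linarith
    obtain ⟨r, hr, hfr⟩ := intermediate_value_Icc' hu.1 hf hmem
    exact h ⟨r, hr, by simp only [sub_eq_zero] at hfr; exact hfr.symm⟩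
end
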